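/- Let k be a nonnegative integer, let α > -1 and let β > 0. Then ∫₀^∞ y^{α} e^{-y} L_k^{(α)}(y/β) dy = (Γ(α+1) (α+1)_k / k!) · ((β−1)/β)^k. -/

import Mathlib

open MeasureTheory Finset Real

/-- Pochhammer symbol `(a)_k = a (a+1) ⋯ (a+k-1)`. -/
noncomputable def poch (a : ℝ) (k : ℕ) : ℝ := ∏ i ∈ Finset.range k, (a + i)

/-- Generalized binomial coefficient `C(a, j) = (a-j+1)_j / j!`. -/
noncomputable def gbinom (a : ℝ) (j : ℕ) : ℝ := poch (a - j + 1) j / (j.factorial : ℝ)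

/-- Generalized Laguerre polynomial `L_n^{(α)}`. -/
noncomputable def Lag (α : ℝ) (n : ℕ) (x : ℝ) : ℝ :=
  ∑ i ∈ Finset.range (n + 1),
    ((-1 : ℝ) ^ i / (i.factorial : ℝ)) * gbinom ((n : ℝ) + α) (n - i) * x ^ i

/-- Physicists' Hermite polynomial `H_n`. -/
noncomputable def Herm (n : ℕ) (x : ℝ) : ℝ :=
  ∑ k ∈ Finset.range (n / 2 + 1),
    ((-1 : ℝ) ^ k * (n.factorial : ℝ) / ((k.factorial : ℝ) * ((n - 2 * k).factorial : ℝ))) *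
      (2 * x) ^ (n - 2 * k)

/-- Jacobi polynomial `P_n^{(α,γ)}`. -/
noncomputable def Jac (α γ : ℝ) (n : ℕ) (x : ℝ) : ℝ :=
  ∑ k ∈ Finset.range (n + 1),
    gbinom ((n : ℝ) + α) (n - k) * gbinom ((n : ℝ) + γ) k *
      ((x - 1) / 2) ^ k * ((x + 1) / 2) ^ (n - k)

/-- Terminating Lauricella function of type A. -/
noncomputable def lauricellaA {r : ℕ} (a : ℝ) (m : Fin r → ℕ) (c x : Fin r → ℝ) : ℝ :=
  ∑ j ∈ Fintype.piFinset (fun i => Finset.range (m i + 1)),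
    poch a (∑ i, j i) *
      ∏ i, (poch (-(m i : ℝ)) (j i) / (poch (c i) (j i) * ((j i).factorial : ℝ)) * x i ^ (j i))

/-- Terminating Gauss hypergeometric sum `₂F₁(-k, b; c; x)`. -/
noncomputable def hyp2F1 (k : ℕ) (b c x : ℝ) : ℝ :=
  ∑ j ∈ Finset.range (k + 1),
    poch (-(k : ℝ)) j * poch b j / (poch c j * (j.factorial : ℝ)) * x ^ j

/-- Terminating hypergeometric sum `₃F₂(-k, b₁, b₂; c₁, c₂; x)`. -/
noncomputable def hyp3F2 (k : ℕ) (b₁ b₂ c₁ c₂ x : ℝ) : ℝ :=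
  ∑ j ∈ Finset.range (k + 1),
    poch (-(k : ℝ)) j * poch b₁ j * poch b₂ j /
      (poch c₁ j * poch c₂ j * (j.factorial : ℝ)) * x ^ j

/-- Gauss hypergeometric series `₂F₁(a, b; c; x)` (a terminating series when `a` or `b`
is a nonpositive integer). -/
noncomputable def hypSum (a b c x : ℝ) : ℝ :=
  ∑' j : ℕ, poch a j * poch b j / (poch c j * (j.factorial : ℝ)) * x ^ j

/-- Terminating Appell function `F₂(a; -m₁, -m₂; c₁, c₂; x₁, x₂)`. -/
noncomputable def appellF2 (a : ℝ) (m₁ m₂ : ℕ) (c₁ c₂ x₁ x₂ : ℝ) : ℝ :=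
  ∑ j₁ ∈ Finset.range (m₁ + 1), ∑ j₂ ∈ Finset.range (m₂ + 1),
    poch a (j₁ + j₂) * poch (-(m₁ : ℝ)) j₁ * poch (-(m₂ : ℝ)) j₂ /
      (poch c₁ j₁ * poch c₂ j₂ * (j₁.factorial : ℝ) * (j₂.factorial : ℝ)) * x₁ ^ j₁ * x₂ ^ j₂

/-- `1/z!` with the convention that it vanishes for negative integers `z`. -/
noncomputable def invFacZ (z : ℤ) : ℝ := if 0 ≤ z then ((z.toNat.factorial : ℕ) : ℝ)⁻¹ else 0

/-- Pochhammer symbol extended to integer index via `(a)_k = Γ(a+k)/Γ(a)` for negative `k`. -/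
noncomputable def pochZ (a : ℝ) (k : ℤ) : ℝ :=
  if 0 ≤ k then poch a k.toNat else Real.Gamma (a + (k : ℝ)) / Real.Gamma a

lemma poch_succ' (a : ℝ) (k : ℕ) : poch a (k+1) = poch a k * (a + k) :=
  Finset.prod_range_succ _ _

lemma poch_split (a : ℝ) {i k : ℕ} (h : i ≤ k) :
    poch a i * poch (a + i) (k - i) = poch a k := by
  obtain ⟨m, rfl⟩ := Nat.exists_eq_add_of_le h
  rw [Nat.add_sub_cancel_left, poch, poch, poch, Finset.prod_range_add]
  congr 1
  exact Finset.prod_congr rfl fun j _ => by push_cast; ring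

lemma Gamma_add_nat' (α : ℝ) (hα : 0 < α) (i : ℕ) :
    Real.Gamma (α + i) = Real.Gamma α * poch α i := by
  induction i with
  | zero => simp [poch]
  | succ n ih =>
    have h : α + ((n+1 : ℕ) : ℝ) = (α + n) + 1 := by push_cast; ring
    rw [h, Real.Gamma_add_one (by positivity), ih, poch_succ']; ring

/-- an integral of a single rescaled Laguerre polynomial against
the Laguerre weight. -/
theorem laguerre_rescaled_weight_integral (k : ℕ) (α β : ℝ) (hα : -1 < α) (hβ : 0 < β) :
    ∫ y in Set.Ioi (0 : ℝ), y ^ α * Real.exp (-y) * Lag α k (y / β) =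
      (Real.Gamma (α + 1) * poch (α + 1) k / (k.factorial : ℝ)) * ((β - 1) / β) ^ k := by
  have hα1 : 0 < α + 1 := by linarith
  set c : ℕ → ℝ := fun i =>
    ((-1:ℝ)^i / (i.factorial : ℝ)) * gbinom ((k:ℝ)+α) (k-i) * β⁻¹ ^ i with hc
  have hs : ∀ i : ℕ, (0:ℝ) < α + 1 + i := fun i => by positivity
  have hintg : ∀ i : ℕ, MeasureTheory.IntegrableOn
      (fun y : ℝ => c i * (Real.exp (-y) * y ^ (α + i))) (Set.Ioi 0) := by
    intro i
    have h' : α + 1 + (i:ℝ) - 1 = α + i := by ring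
    have := (Real.GammaIntegral_convergent (hs i)).const_mul (c i)
    rw [h'] at this
    exact this
  have h1 : ∀ y ∈ Set.Ioi (0:ℝ), y ^ α * Real.exp (-y) * Lag α k (y / β)
      = ∑ i ∈ Finset.range (k+1), c i * (Real.exp (-y) * y ^ (α + i)) := by
    intro y hy
    have hy0 : (0:ℝ) < y := hy
    simp only [Lag, Finset.mul_sum]
    refine Finset.sum_congr rfl fun i _ => ?_
    rw [hc]
    have hpow : y ^ (α + (i:ℝ)) = y ^ α * y ^ i := by
      rw [Real.rpow_add hy0, Real.rpow_natCast]
    rw [hpow]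
    simp only [div_eq_mul_inv, mul_pow]
    ring
  have key : ∀ i : ℕ, ∫ y in Set.Ioi (0:ℝ), Real.exp (-y) * y ^ (α + i)
      = Real.Gamma (α + 1 + i) := by
    intro i
    rw [Real.Gamma_eq_integral (hs i)]
    have : α + 1 + i - 1 = α + i := by ring
    rw [this]
  rw [MeasureTheory.setIntegral_congr_fun measurableSet_Ioi h1,
    MeasureTheory.integral_finset_sum _ (fun i _ => hintg i)]
  simp_rw [MeasureTheory.integral_const_mul, key]
  -- now the algebraic identity
  have hterm : ∀ i ∈ Finset.range (k+1),
      c i * Real.Gamma (α + 1 + i)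
        = (Real.Gamma (α + 1) * poch (α + 1) k / (k.factorial : ℝ)) *
            ((-β⁻¹) ^ i * 1 ^ (k - i) * (k.choose i : ℝ)) := by
    intro i hi
    have hik : i ≤ k := Nat.lt_succ_iff.mp (Finset.mem_range.mp hi)
    have hgb : gbinom ((k:ℝ)+α) (k-i) = poch (α + 1 + i) (k-i) / ((k-i).factorial : ℝ) := by
      rw [gbinom]
      congr 2
      push_cast [hik]
      ring
    have hG : Real.Gamma (α + 1 + i) = Real.Gamma (α+1) * poch (α+1) i :=
      Gamma_add_nat' _ hα1 i
    have hps : poch (α+1) i * poch ((α+1) + i) (k - i) = poch (α+1) k := poch_split _ hik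
    have hcho : (k.choose i : ℝ) * (i.factorial : ℝ) * ((k-i).factorial : ℝ)
        = (k.factorial : ℝ) := by
      exact_mod_cast congrArg (Nat.cast : ℕ → ℝ)
        (Nat.choose_mul_factorial_mul_factorial hik)
    have hfi : (i.factorial : ℝ) ≠ 0 := Nat.cast_ne_zero.mpr i.factorial_ne_zero
    have hfki : ((k-i).factorial : ℝ) ≠ 0 := Nat.cast_ne_zero.mpr (k-i).factorial_ne_zero
    have hfk : (k.factorial : ℝ) ≠ 0 := Nat.cast_ne_zero.mpr k.factorial_ne_zero
    simp only [hc]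
    have hch0 : (k.choose i : ℝ) ≠ 0 := Nat.cast_ne_zero.mpr (Nat.choose_pos hik).ne'
    have hβ0 : β ≠ 0 := hβ.ne'
    rw [hgb, hG, ← hps, ← hcho]
    field_simp
    ring
  rw [Finset.sum_congr rfl hterm, ← Finset.mul_sum, ← add_pow]
  congr 1
  field_simp
  ring
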